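/- Let p be an odd prime. Consider the set of strongly carefree tuples (a_1,…,a_{p−1}) of positive integers with ∏_{i=1}^{p−1} a_i^i > 1, with the group (ℤ/pℤ)ˣ acting by index permutation: an element k ∈ (ℤ/pℤ)ˣ sends (a_1,…,a_{p−1}) to (a_{σ_k(1)},…,a_{σ_k(p−1)}), where σ_k(i) is the unique element of {1,…,p−1} congruent to k·i modulo p. Then the map sending a tuple to the subfield ℚ((∏_{i=1}^{p−1} a_i^i)^{1/p}) of ℝ descends to a bijection between the set of orbits of this action and the set of subfields of ℝ of the form ℚ(m^{1/p}) with m an integer, m > 1, m not divisible by the p-th power of any prime (i.e., the set of isomorphism classes of pure prime degree p number fields). -/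

import Mathlib

open Finset

/-- A tuple `(a 1, …, a (p-1))` of positive integers is *strongly carefree* if each `a i`
is squarefree and the `a i` are pairwise coprime. -/
def StronglyCarefree (p : ℕ) (a : ℕ → ℕ) : Prop :=
  (∀ i ∈ Finset.Icc 1 (p - 1), 0 < a i ∧ Squarefree (a i)) ∧
  (∀ i ∈ Finset.Icc 1 (p - 1), ∀ j ∈ Finset.Icc 1 (p - 1), i ≠ j → Nat.Coprime (a i) (a j))

/-- The pure prime degree field attached to a strongly carefree tuple:
`ℚ((∏ i, a i ^ i)^(1/p)) ⊆ ℝ`, using the real `p`-th root. -/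
noncomputable def pureField (p : ℕ) (a : ℕ → ℕ) : IntermediateField ℚ ℝ :=
  IntermediateField.adjoin ℚ
    {((∏ i ∈ Finset.Icc 1 (p - 1), a i ^ i : ℕ) : ℝ) ^ ((p : ℝ)⁻¹)}

/-- Two strongly carefree tuples are in the same orbit of the `(ℤ/pℤ)ˣ`-action by index
permutation: some `k` coprime to `p` satisfies `a' i = a ((k·i) mod p)` for `1 ≤ i ≤ p−1`. -/
def SameOrbit (p : ℕ) (a a' : ℕ → ℕ) : Prop :=
  ∃ k : ℕ, Nat.Coprime k p ∧ ∀ i ∈ Finset.Icc 1 (p - 1), a' i = a (k * i % p)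

/-- A pure prime degree `p` field: a subfield of `ℝ` of the form `ℚ(m^(1/p))` for an
integer `m > 1` not divisible by the `p`-th power of any prime. -/
def IsPureField (p : ℕ) (K : IntermediateField ℚ ℝ) : Prop :=
  ∃ m : ℕ, 1 < m ∧ (∀ q : ℕ, q.Prime → ¬ q ^ p ∣ m) ∧
    K = IntermediateField.adjoin ℚ {((m : ℕ) : ℝ) ^ ((p : ℝ)⁻¹)}



section Aux

open IntermediateField Polynomial

lemma sqf_dvd {x y : ℕ} (hx : Squarefree x) (hy : 0 < y)
    (h : ∀ q : ℕ, q.Prime → q ∣ x → q ∣ y) : x ∣ y := by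
  have hx0 : x ≠ 0 := hx.ne_zero
  rw [← Nat.factorization_le_iff_dvd hx0 hy.ne']
  intro q
  by_cases hq : q.Prime
  · by_cases hqx : q ∣ x
    · have h1 : x.factorization q ≤ 1 := hx.natFactorization_le_one q
      have h2 : 0 < y.factorization q := hq.factorization_pos_of_dvd hy.ne' (h q hq hqx)
      omega
    · simp [Nat.factorization_eq_zero_of_not_dvd hqx]
  · simp [Nat.factorization_eq_zero_of_not_prime _ hq]

lemma sqf_eq {x y : ℕ} (hx0 : 0 < x) (hx : Squarefree x) (hy0 : 0 < y) (hy : Squarefree y)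
    (h : ∀ q : ℕ, q.Prime → (q ∣ x ↔ q ∣ y)) : x = y :=
  Nat.dvd_antisymm (sqf_dvd hx hy0 fun q hq hd => (h q hq).1 hd)
    (sqf_dvd hy hx0 fun q hq hd => (h q hq).2 hd)

lemma rat_pow_nat {q : ℚ} {p n : ℕ} (hp : p ≠ 0) (hq : 0 ≤ q) (h : q ^ p = (n : ℚ)) :
    ∃ t : ℕ, q = (t : ℚ) ∧ t ^ p = n := by
  have hd : q.den ^ p = 1 := by
    have := congrArg Rat.den h
    simpa using this
  have hden : q.den = 1 := pow_eq_one_iff_left hp |>.mp hd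
  have hnum : (0:ℤ) ≤ q.num := Rat.num_nonneg.mpr hq
  have hqnum : q = (q.num : ℚ) := by
    conv_lhs => rw [← Rat.num_div_den q]
    rw [hden]; simp
  have hqt : q = (q.num.toNat : ℚ) := by
    rw [hqnum]
    exact_mod_cast congrArg (Int.cast : ℤ → ℚ) (Int.toNat_of_nonneg hnum).symm
  refine ⟨q.num.toNat, hqt, ?_⟩
  rw [hqt] at h
  exact_mod_cast h

lemma no_rat_root {p m : ℕ} (hp : p.Prime) (hodd : Odd p) (hm : 1 < m)
    (h : ∀ q : ℕ, q.Prime → ¬ q ^ p ∣ m) : ∀ b : ℚ, b ^ p ≠ (m : ℚ) := by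
  intro b hb
  have hbpos : 0 < b := by
    have h0 : (0:ℚ) < b ^ p := by
      rw [hb]; exact_mod_cast Nat.lt_of_lt_of_le Nat.zero_lt_one hm.le
    exact hodd.pow_pos_iff.mp h0
  obtain ⟨t, -, ht⟩ := rat_pow_nat hp.ne_zero hbpos.le hb
  have ht1 : 1 < t := by
    by_contra hcon
    interval_cases t
    · simp [zero_pow hp.ne_zero] at ht; omega
    · simp at ht; omega
  obtain ⟨q, hq, hqd⟩ := Nat.exists_prime_and_dvd (by omega : t ≠ 1)
  exact h q hq (ht ▸ pow_dvd_pow_of_dvd hqd p)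

section SC
variable {p : ℕ} {a : ℕ → ℕ}

lemma SC.prod_pos (h : StronglyCarefree p a) : 0 < ∏ i ∈ Icc 1 (p-1), a i ^ i :=
  Finset.prod_pos fun i hi => pow_pos (h.1 i hi).1 i

lemma SC.fact_eq (h : StronglyCarefree p a) {i q : ℕ} (hi : i ∈ Icc 1 (p-1)) (hq : q.Prime)
    (hd : q ∣ a i) : (∏ j ∈ Icc 1 (p-1), a j ^ j).factorization q = i := by
  rw [Nat.factorization_prod (fun j hj => pow_ne_zero j (h.1 j hj).1.ne')]
  rw [Finset.sum_apply']
  have key : ∀ j ∈ Icc 1 (p-1), ((a j ^ j).factorization) q = if j = i then i else 0 := by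
    intro j hj
    rw [Nat.factorization_pow]
    simp only [Finsupp.smul_apply, smul_eq_mul]
    by_cases hji : j = i
    · subst hji
      rw [Nat.factorization_eq_one_of_squarefree (h.1 j hj).2 hq hd]
      simp
    · have hcop := h.2 j hj i hi hji
      have hnd : ¬ q ∣ a j := by
        intro hqj
        have : q ∣ Nat.gcd (a j) (a i) := Nat.dvd_gcd hqj hd
        rw [hcop] at this
        exact hq.ne_one (Nat.eq_one_of_dvd_one this)
      rw [Nat.factorization_eq_zero_of_not_dvd hnd]
      simp [hji]
  rw [Finset.sum_congr rfl key, Finset.sum_ite_eq' (Icc 1 (p-1)) i (fun _ => i)]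
  simp [hi]

lemma SC.dvd_prod_iff (h : StronglyCarefree p a) {q : ℕ} (hq : q.Prime) :
    q ∣ (∏ j ∈ Icc 1 (p-1), a j ^ j) ↔ ∃ i ∈ Icc 1 (p-1), q ∣ a i := by
  rw [Prime.dvd_finset_prod_iff hq.prime]
  constructor
  · rintro ⟨i, hi, hd⟩
    exact ⟨i, hi, hq.dvd_of_dvd_pow hd⟩
  · rintro ⟨i, hi, hd⟩
    refine ⟨i, hi, hd.trans (dvd_pow_self _ ?_)⟩
    have := (mem_Icc.mp hi).1; omega

lemma SC.fact_le (h : StronglyCarefree p a) (q : ℕ) :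
    (∏ j ∈ Icc 1 (p-1), a j ^ j).factorization q ≤ p - 1 := by
  by_cases hq : q.Prime
  · by_cases hd : q ∣ (∏ j ∈ Icc 1 (p-1), a j ^ j)
    · obtain ⟨i, hi, hdi⟩ := (SC.dvd_prod_iff h hq).mp hd
      rw [SC.fact_eq h hi hq hdi]
      exact (mem_Icc.mp hi).2
    · simp [Nat.factorization_eq_zero_of_not_dvd hd]
  · simp [Nat.factorization_eq_zero_of_not_prime _ hq]

lemma SC.dvd_iff (h : StronglyCarefree p a) {i q : ℕ} (hi : i ∈ Icc 1 (p-1)) (hq : q.Prime) :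
    q ∣ a i ↔ (∏ j ∈ Icc 1 (p-1), a j ^ j).factorization q = i := by
  constructor
  · exact SC.fact_eq h hi hq
  · intro hv
    have hi1 : 1 ≤ i := (mem_Icc.mp hi).1
    have hdm : q ∣ (∏ j ∈ Icc 1 (p-1), a j ^ j) :=
      Nat.dvd_of_factorization_pos (by omega)
    obtain ⟨j, hj, hdj⟩ := (SC.dvd_prod_iff h hq).mp hdm
    have := SC.fact_eq h hj hq hdj
    rwa [show j = i by omega] at hdj

end SC

lemma prod_primes_squarefree {s : Finset ℕ} (hs : ∀ q ∈ s, q.Prime) :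
    Squarefree (∏ q ∈ s, q) := by
  classical
  induction s using Finset.induction_on with
  | empty => simpa using squarefree_one
  | @insert q s hqs ih =>
    rw [Finset.prod_insert hqs]
    have hq : q.Prime := hs q (Finset.mem_insert_self q s)
    have hcop : Nat.Coprime q (∏ r ∈ s, r) := by
      apply Nat.Coprime.prod_right
      intro r hr
      exact (Nat.coprime_primes hq (hs r (Finset.mem_insert_of_mem hr))).mpr
        (fun h => hqs (h ▸ hr))
    rw [Nat.squarefree_mul hcop]
    exact ⟨hq.squarefree, ih fun r hr => hs r (Finset.mem_insert_of_mem hr)⟩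

def can (m : ℕ) (i : ℕ) : ℕ :=
  ∏ q ∈ m.primeFactors.filter (fun q => m.factorization q = i), q

lemma can_pos (m i : ℕ) : 0 < can m i :=
  Finset.prod_pos fun q hq =>
    (Nat.prime_of_mem_primeFactors (Finset.mem_filter.mp hq).1).pos

lemma can_squarefree (m i : ℕ) : Squarefree (can m i) :=
  prod_primes_squarefree fun q hq =>
    Nat.prime_of_mem_primeFactors (Finset.mem_filter.mp hq).1

lemma can_dvd_iff {m i q : ℕ} (hm0 : m ≠ 0) (hq : q.Prime) :
    q ∣ can m i ↔ (q ∣ m ∧ m.factorization q = i) := by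
  rw [can, Prime.dvd_finset_prod_iff hq.prime]
  constructor
  · rintro ⟨r, hr, hdr⟩
    have hr' := Finset.mem_filter.mp hr
    have heq : q = r :=
      (Nat.prime_dvd_prime_iff_eq hq (Nat.prime_of_mem_primeFactors hr'.1)).mp hdr
    subst heq
    exact ⟨Nat.dvd_of_mem_primeFactors hr'.1, hr'.2⟩
  · rintro ⟨h1, h2⟩
    exact ⟨q, Finset.mem_filter.mpr ⟨Nat.mem_primeFactors.mpr ⟨hq, h1, hm0⟩, h2⟩, dvd_rfl⟩

lemma can_coprime {m : ℕ} {i j : ℕ} (hij : i ≠ j) : Nat.Coprime (can m i) (can m j) := by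
  apply Nat.Coprime.prod_left
  intro q hq
  apply Nat.Coprime.prod_right
  intro r hr
  have hq' := Finset.mem_filter.mp hq
  have hr' := Finset.mem_filter.mp hr
  refine (Nat.coprime_primes (Nat.prime_of_mem_primeFactors hq'.1)
    (Nat.prime_of_mem_primeFactors hr'.1)).mpr fun h => hij ?_
  rw [← hq'.2, ← hr'.2, h]

lemma can_prod {p m : ℕ} (hp : 2 ≤ p) (hm : 1 < m) (h : ∀ q : ℕ, q.Prime → ¬ q ^ p ∣ m) :
    ∏ i ∈ Icc 1 (p-1), (can m i) ^ i = m := by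
  classical
  have hm0 : m ≠ 0 := by omega
  have hmap : ∀ q ∈ m.primeFactors, m.factorization q ∈ Icc 1 (p-1) := by
    intro q hq
    have hqp : q.Prime := Nat.prime_of_mem_primeFactors hq
    have h1 : 0 < m.factorization q :=
      hqp.factorization_pos_of_dvd hm0 (Nat.dvd_of_mem_primeFactors hq)
    have h2 : m.factorization q ≤ p - 1 := by
      by_contra hc
      exact h q hqp ((Nat.Prime.pow_dvd_iff_le_factorization hqp hm0).mpr (by omega))
    exact mem_Icc.mpr ⟨h1, h2⟩
  calc ∏ i ∈ Icc 1 (p-1), (can m i) ^ i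
      = ∏ i ∈ Icc 1 (p-1), ∏ q ∈ m.primeFactors.filter (fun q => m.factorization q = i),
          q ^ (m.factorization q) := by
        refine Finset.prod_congr rfl fun i hi => ?_
        rw [can, ← Finset.prod_pow]
        exact Finset.prod_congr rfl fun q hq => by rw [(Finset.mem_filter.mp hq).2]
    _ = ∏ q ∈ m.primeFactors, q ^ m.factorization q :=
        Finset.prod_fiberwise_of_maps_to hmap _
    _ = m := by
        conv_rhs => rw [← Nat.factorization_prod_pow_eq_self hm0]
        rw [Finsupp.prod, Nat.support_factorization]

lemma fix_rat {K : Type*} [Field K] [Algebra ℚ K] {P : ℕ} (hP : P.Prime)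
    [FiniteDimensional ℚ K] (hfr : Module.finrank ℚ K = P)
    (σ ι : K →ₐ[ℚ] ℂ) {g : K} (hne : σ g ≠ ι g)
    {x : K} (hx : σ x = ι x) : ∃ q : ℚ, x = algebraMap ℚ K q := by
  have hxint : IsIntegral ℚ x := IsIntegral.of_finite ℚ x
  have hdd : Module.finrank ℚ ℚ⟮x⟯ = (minpoly ℚ x).natDegree := adjoin.finrank hxint
  have hmul : Module.finrank ℚ ℚ⟮x⟯ * Module.finrank ℚ⟮x⟯ K = P := by
    rw [← hfr]; exact Module.finrank_mul_finrank ℚ ℚ⟮x⟯ K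
  have hdvd : (minpoly ℚ x).natDegree ∣ P := ⟨_, by rw [← hmul, hdd]⟩
  rcases hP.eq_one_or_self_of_dvd _ hdvd with h1 | hPd
  · have hmono := minpoly.monic hxint
    have hlin := hmono.eq_X_add_C h1
    have h0 := minpoly.aeval ℚ x
    rw [hlin, map_add, aeval_X, aeval_C] at h0
    refine ⟨-((minpoly ℚ x).coeff 0), ?_⟩
    rw [map_neg]
    linear_combination h0
  · exfalso
    have htop : ℚ⟮x⟯ = ⊤ := by
      refine IntermediateField.eq_of_le_of_finrank_eq le_top ?_
      rw [hdd, hPd, IntermediateField.finrank_top', hfr]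
    have hmem : g ∈ Algebra.adjoin ℚ {x} := by
      rw [← IntermediateField.adjoin_simple_toSubalgebra_of_isAlgebraic hxint.isAlgebraic]
      show g ∈ ℚ⟮x⟯
      rw [htop]; exact IntermediateField.mem_top
    rw [Algebra.adjoin_singleton_eq_range_aeval] at hmem
    obtain ⟨f, hf⟩ := hmem
    apply hne
    have hf' : aeval x f = g := hf
    rw [← hf', ← Polynomial.aeval_algHom_apply, ← Polynomial.aeval_algHom_apply, hx]

lemma minpoly_alpha {p m : ℕ} (hp : p.Prime) (hodd : Odd p) (hm : 1 < m)
    (h : ∀ q : ℕ, q.Prime → ¬ q ^ p ∣ m) :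
    minpoly ℚ ((m : ℝ) ^ ((p : ℝ)⁻¹)) = X ^ p - C (m : ℚ) := by
  have hpow : ((m : ℝ) ^ ((p : ℝ)⁻¹)) ^ p = (m : ℝ) :=
    Real.rpow_inv_natCast_pow (by positivity) hp.ne_zero
  have h0 : aeval ((m : ℝ) ^ ((p : ℝ)⁻¹)) ((X : ℚ[X]) ^ p - C (m : ℚ)) = 0 := by
    rw [map_sub, map_pow, aeval_X, aeval_C]
    rw [show (algebraMap ℚ ℝ) (m : ℚ) = (m : ℝ) by push_cast; simp]
    rw [hpow, sub_self]
  exact (minpoly.eq_of_irreducible_of_monic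
    (X_pow_sub_C_irreducible_of_prime hp (no_rat_root hp hodd hm h)) h0
    (monic_X_pow_sub_C _ hp.ne_zero)).symm

lemma alpha_integral {p m : ℕ} (hp : p.Prime) :
    IsIntegral ℚ ((m : ℝ) ^ ((p : ℝ)⁻¹)) := by
  refine ⟨X ^ p - C (m : ℚ), monic_X_pow_sub_C _ hp.ne_zero, ?_⟩
  have hpow : ((m : ℝ) ^ ((p : ℝ)⁻¹)) ^ p = (m : ℝ) :=
    Real.rpow_inv_natCast_pow (by positivity) hp.ne_zero
  rw [← Polynomial.aeval_def, map_sub, map_pow, aeval_X, aeval_C]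
  rw [show (algebraMap ℚ ℝ) (m : ℚ) = (m : ℝ) by push_cast; simp]
  rw [hpow, sub_self]

lemma alpha_finrank {p m : ℕ} (hp : p.Prime) (hodd : Odd p) (hm : 1 < m)
    (h : ∀ q : ℕ, q.Prime → ¬ q ^ p ∣ m) :
    Module.finrank ℚ ℚ⟮((m : ℝ) ^ ((p : ℝ)⁻¹))⟯ = p := by
  rw [IntermediateField.adjoin.finrank (alpha_integral hp), minpoly_alpha hp hodd hm h,
    natDegree_X_pow_sub_C]

lemma key_exponent {p m m' : ℕ} (hp : p.Prime) (hodd : Odd p) (hm : 1 < m) (hm' : 1 < m')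
    (hfm : ∀ q : ℕ, q.Prime → ¬ q ^ p ∣ m) (hfm' : ∀ q : ℕ, q.Prime → ¬ q ^ p ∣ m')
    (hmem : ((m' : ℝ) ^ ((p : ℝ)⁻¹)) ∈ ℚ⟮((m : ℝ) ^ ((p : ℝ)⁻¹))⟯) :
    ∃ k t : ℕ, 0 < k ∧ k < p ∧ m' * m ^ (p - k) = t ^ p := by
  set α : ℝ := (m : ℝ) ^ ((p : ℝ)⁻¹) with hα
  set β : ℝ := (m' : ℝ) ^ ((p : ℝ)⁻¹) with hβ
  have hαpow : α ^ p = (m : ℝ) := Real.rpow_inv_natCast_pow (by positivity) hp.ne_zero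
  have hβpow : β ^ p = (m' : ℝ) := Real.rpow_inv_natCast_pow (by positivity) hp.ne_zero
  have hαpos : 0 < α := Real.rpow_pos_of_pos (by exact_mod_cast Nat.lt_of_lt_of_le Nat.zero_lt_one hm.le) _
  have hβpos : 0 < β := Real.rpow_pos_of_pos (by exact_mod_cast Nat.lt_of_lt_of_le Nat.zero_lt_one hm'.le) _
  have hint : IsIntegral ℚ α := alpha_integral hp
  haveI : FiniteDimensional ℚ ℚ⟮α⟯ := IntermediateField.adjoin.finiteDimensional hint
  have hfr : Module.finrank ℚ ℚ⟮α⟯ = p := alpha_finrank hp hodd hm hfm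
  -- primitive root
  set ζ : ℂ := Complex.exp (2 * Real.pi * Complex.I / p) with hζdef
  have hζ : IsPrimitiveRoot ζ p := Complex.isPrimitiveRoot_exp p hp.ne_zero
  have hζp : ζ ^ p = 1 := hζ.pow_eq_one
  -- embedding σ
  have hroot : aeval (ζ * (α : ℂ)) (minpoly ℚ (IntermediateField.AdjoinSimple.gen ℚ α)) = 0 := by
    rw [show minpoly ℚ (IntermediateField.AdjoinSimple.gen ℚ α) = minpoly ℚ α from IntermediateField.minpoly_gen (F := ℚ) (α := α), minpoly_alpha hp hodd hm hfm]
    rw [map_sub, map_pow, aeval_X, aeval_C, mul_pow, hζp, one_mul]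
    rw [show ((α : ℂ)) ^ p = ((m : ℝ) : ℂ) by rw [← Complex.ofReal_pow, hαpow]]
    rw [show (algebraMap ℚ ℂ) (m : ℚ) = ((m : ℝ) : ℂ) by push_cast; simp]
    rw [sub_self]
  set B := IntermediateField.adjoin.powerBasis hint with hB
  have hBgen : B.gen = IntermediateField.AdjoinSimple.gen ℚ α :=
    IntermediateField.adjoin.powerBasis_gen hint
  set σ : ℚ⟮α⟯ →ₐ[ℚ] ℂ := B.lift (ζ * (α : ℂ)) (by rw [hBgen]; exact hroot) with hσ
  have hσgen : σ (IntermediateField.AdjoinSimple.gen ℚ α) = ζ * (α : ℂ) := by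
    rw [← hBgen]; exact B.lift_gen _ _
  set ι : ℚ⟮α⟯ →ₐ[ℚ] ℂ :=
    ((Complex.ofRealAm).restrictScalars ℚ).comp (IntermediateField.val ℚ⟮α⟯) with hι
  have hιval : ∀ y : ℚ⟮α⟯, ι y = ((y : ℝ) : ℂ) := fun y => rfl
  have hιgen : ι (IntermediateField.AdjoinSimple.gen ℚ α) = ((α : ℝ) : ℂ) := rfl
  have hαC : ((α : ℝ) : ℂ) ≠ 0 := by
    simpa using hαpos.ne'
  have hne : σ (IntermediateField.AdjoinSimple.gen ℚ α) ≠ ι (IntermediateField.AdjoinSimple.gen ℚ α) := by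
    rw [hσgen, hιgen]
    intro hcon
    have h1 : ζ * ((α:ℝ):ℂ) = 1 * ((α:ℝ):ℂ) := by rw [one_mul]; exact hcon
    exact hζ.ne_one hp.one_lt (mul_right_cancel₀ hαC h1)
  -- the element x = β in K
  set x : ℚ⟮α⟯ := ⟨β, hmem⟩ with hx
  have hxcoe : (x : ℝ) = β := rfl
  have hxp : ((x ^ p : ℚ⟮α⟯) : ℝ) = (m' : ℝ) := by push_cast [hxcoe]; exact hβpow
  have hσxp : (σ x) ^ p = ((m' : ℝ) : ℂ) := by
    have : x ^ p = ((m' : ℕ) : ℚ⟮α⟯) := by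
      apply Subtype.coe_injective
      show ((x ^ p : ℚ⟮α⟯) : ℝ) = (((m' : ℕ) : ℚ⟮α⟯) : ℝ)
      rw [hxp]; push_cast; ring
    rw [← map_pow, this, map_natCast]
    push_cast; ring
  have hβC : ((β : ℝ) : ℂ) ≠ 0 := by simpa using hβpos.ne'
  have hu : (σ x / ((β : ℝ) : ℂ)) ^ p = 1 := by
    rw [div_pow, hσxp, ← Complex.ofReal_pow, hβpow]
    exact div_self (by simp only [ne_eq, Complex.ofReal_natCast, Nat.cast_eq_zero]; omega)
  haveI : NeZero p := ⟨hp.ne_zero⟩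
  obtain ⟨k, hklt, hζk⟩ := hζ.eq_pow_of_pow_eq_one hu
  have hσx : σ x = ζ ^ k * ((β : ℝ) : ℂ) := by
    rw [hζk, div_mul_cancel₀ _ hβC]
  have hk0 : k ≠ 0 := by
    intro hk
    subst hk
    rw [pow_zero, one_mul] at hσx
    have hfix : σ x = ι x := by rw [hσx, hιval]
    obtain ⟨q, hq⟩ := fix_rat hp hfr σ ι hne hfix
    have hqβ : β = (q : ℝ) := by
      have := congrArg (fun y : ℚ⟮α⟯ => (y : ℝ)) hq
      simpa [hxcoe] using this
    have : (q : ℚ) ^ p = (m' : ℚ) := by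
      have : ((q ^ p : ℚ) : ℝ) = ((m' : ℚ) : ℝ) := by rw [Rat.cast_pow, ← hqβ, hβpow]; norm_cast
      exact_mod_cast this
    exact no_rat_root hp hodd hm' hfm' q this
  -- gamma
  set g := IntermediateField.AdjoinSimple.gen ℚ α with hg
  have hgcoe : ((g : ℝ) : ℂ) = ((α : ℝ) : ℂ) := rfl
  set γ : ℚ⟮α⟯ := x * g ^ (p - k) with hγ
  have hγcoe : (γ : ℝ) = β * α ^ (p - k) := by
    rw [hγ]
    push_cast
    rfl
  have hζkk : ζ ^ k * ζ ^ (p - k) = 1 := by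
    rw [← pow_add, Nat.add_sub_cancel' hklt.le, hζp]
  have hσγval : σ γ = ((β : ℝ) : ℂ) * ((α : ℝ) : ℂ) ^ (p - k) := by
    rw [hγ, map_mul, map_pow, hσgen, hσx, mul_pow]
    calc ζ ^ k * ((β:ℝ):ℂ) * (ζ ^ (p - k) * ((α:ℝ):ℂ) ^ (p - k))
        = (ζ ^ k * ζ ^ (p - k)) * (((β:ℝ):ℂ) * ((α:ℝ):ℂ) ^ (p - k)) := by ring
      _ = ((β:ℝ):ℂ) * ((α:ℝ):ℂ) ^ (p - k) := by rw [hζkk, one_mul]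
  have hσγ : σ γ = ι γ := by
    rw [hσγval, hιval, hγcoe]
    push_cast
    ring
  obtain ⟨q, hq⟩ := fix_rat hp hfr σ ι hne hσγ
  have hγreal : β * α ^ (p - k) = (q : ℝ) := by
    rw [← hγcoe, hq]
    rfl
  have hqpos : 0 ≤ q := by
    have : (0:ℝ) < (q:ℝ) := by rw [← hγreal]; positivity
    exact_mod_cast this.le
  have hqp : (q : ℚ) ^ p = ((m' * m ^ (p - k) : ℕ) : ℚ) := by
    have hreal : ((q : ℚ) : ℝ) ^ p = ((m' * m ^ (p - k) : ℕ) : ℝ) := by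
      rw [← hγreal, mul_pow, hβpow, ← pow_mul, mul_comm (p - k) p, pow_mul, hαpow]
      push_cast; ring
    exact_mod_cast hreal
  obtain ⟨t, -, ht⟩ := rat_pow_nat hp.ne_zero hqpos hqp
  exact ⟨k, t, Nat.pos_of_ne_zero hk0, hklt, ht.symm⟩

-- modular helpers
lemma inv_coprime {p k K : ℕ} (hkK : k * K % p = 1) : Nat.Coprime K p := by
  have h1 : k * K = p * (k * K / p) + 1 := by rw [← hkK]; exact (Nat.div_add_mod _ _).symm
  have hd1 : Nat.gcd K p ∣ k * K := Dvd.dvd.mul_left (Nat.gcd_dvd_left K p) k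
  have hd2 : Nat.gcd K p ∣ p * (k * K / p) := Dvd.dvd.mul_right (Nat.gcd_dvd_right K p) _
  have h3 : k * K - p * (k * K / p) = 1 := by omega
  have := Nat.dvd_sub hd1 hd2
  rw [h3] at this
  exact Nat.dvd_one.mp this

lemma inv_index {p k K : ℕ} (hp1 : 1 < p) (hkK : k * K % p = 1) :
    ∀ j, j < p → k * (K * j % p) % p = j := by
  intro j hj
  have hkK' : k * K ≡ 1 [MOD p] := by
    unfold Nat.ModEq; rw [hkK, Nat.mod_eq_of_lt hp1]
  have h1 : k * (K * j % p) ≡ k * (K * j) [MOD p] := (Nat.mod_modEq (K * j) p).mul_left k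
  have h2 : k * (K * j) = (k * K) * j := by ring
  have h3 : (k * K) * j ≡ 1 * j [MOD p] := hkK'.mul_right j
  have h4 : k * (K * j % p) ≡ j [MOD p] := by
    rw [h2] at h1
    simpa using h1.trans h3
  have := h4
  unfold Nat.ModEq at this
  rwa [Nat.mod_eq_of_lt hj] at this

lemma idx_mem {p k : ℕ} (hp : p.Prime) (hk : Nat.Coprime k p) {i : ℕ}
    (hi : i ∈ Icc 1 (p-1)) : k * i % p ∈ Icc 1 (p-1) := by
  obtain ⟨hi1, hi2⟩ := mem_Icc.mp hi
  have hp1 := hp.one_lt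
  have hnk : ¬ p ∣ k := fun h => by
    have : p ∣ Nat.gcd k p := Nat.dvd_gcd h dvd_rfl
    rw [hk] at this
    have h6 := Nat.le_of_dvd Nat.one_pos this
    omega
  have hni : ¬ p ∣ i := by
    intro h
    have h5 : p ≤ i := Nat.le_of_dvd (by omega) h
    omega
  have hnd : ¬ p ∣ k * i := fun h => by
    rcases (Nat.Prime.dvd_mul hp).mp h with h | h
    · exact hnk h
    · exact hni h
  have hne : k * i % p ≠ 0 := fun h => hnd (Nat.dvd_of_mod_eq_zero h)
  have hlt : k * i % p < p := Nat.mod_lt _ (by omega)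
  exact mem_Icc.mpr ⟨by omega, by omega⟩

lemma orbit_symm {p : ℕ} (hp : p.Prime) {a a' : ℕ → ℕ} (h : SameOrbit p a a') :
    SameOrbit p a' a := by
  obtain ⟨k, hk, horb⟩ := h
  obtain ⟨K, -, hK⟩ := Nat.exists_mul_mod_eq_one_of_coprime hk hp.one_lt
  refine ⟨K, inv_coprime hK, fun i hi => ?_⟩
  have hKi : K * i % p ∈ Icc 1 (p-1) := idx_mem hp (inv_coprime hK) hi
  rw [horb (K * i % p) hKi, inv_index hp.one_lt hK i (by
    have := mem_Icc.mp hi; omega)]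

lemma fact_prod_pow {s : Finset ℕ} (hs : ∀ q ∈ s, q.Prime) (e : ℕ → ℕ) (r : ℕ) :
    (∏ q ∈ s, q ^ e q).factorization r = if r ∈ s then e r else 0 := by
  classical
  rw [Nat.factorization_prod (fun q hq => pow_ne_zero _ (hs q hq).pos.ne')]
  rw [Finset.sum_apply']
  have : ∀ q ∈ s, ((q ^ e q).factorization) r = if q = r then e q else 0 := by
    intro q hq
    rw [Nat.factorization_pow, Nat.Prime.factorization (hs q hq)]
    simp [Finsupp.single_apply]
  rw [Finset.sum_congr rfl this, Finset.sum_ite_eq' s r e]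

lemma orbit_le {p : ℕ} (hp : p.Prime) {a a' : ℕ → ℕ}
    (ha : StronglyCarefree p a) (ha' : StronglyCarefree p a')
    {k : ℕ} (hk : Nat.Coprime k p)
    (horb : ∀ i ∈ Icc 1 (p-1), a' i = a (k * i % p)) :
    pureField p a' ≤ pureField p a := by
  classical
  set m := ∏ i ∈ Icc 1 (p-1), a i ^ i with hmdef
  set m' := ∏ i ∈ Icc 1 (p-1), a' i ^ i with hm'def
  have hm0 : 0 < m := SC.prod_pos ha
  have hm'0 : 0 < m' := SC.prod_pos ha'
  obtain ⟨K, -, hK⟩ := Nat.exists_mul_mod_eq_one_of_coprime hk hp.one_lt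
  have hKcop : Nat.Coprime K p := inv_coprime hK
  have hK0 : K ≠ 0 := by rintro rfl; rw [Nat.mul_zero, Nat.zero_mod] at hK; omega
  -- valuation relation
  have hdvd_iff : ∀ q : ℕ, q.Prime → (q ∣ m' ↔ q ∣ m) := by
    intro q hq
    rw [SC.dvd_prod_iff ha' hq, SC.dvd_prod_iff ha hq]
    constructor
    · rintro ⟨i, hi, hd⟩
      rw [horb i hi] at hd
      exact ⟨k * i % p, idx_mem hp hk hi, hd⟩
    · rintro ⟨j, hj, hd⟩
      have hj' := mem_Icc.mp hj
      refine ⟨K * j % p, idx_mem hp hKcop hj, ?_⟩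
      rw [horb _ (idx_mem hp hKcop hj), inv_index hp.one_lt hK j (by omega)]
      exact hd
  have hval : ∀ q : ℕ, m'.factorization q = K * m.factorization q % p := by
    intro q
    by_cases hq : q.Prime
    · by_cases hqm : q ∣ m
      · obtain ⟨j, hj, hdj⟩ := (SC.dvd_prod_iff ha hq).mp hqm
        have hvm : m.factorization q = j := SC.fact_eq ha hj hq hdj
        have hj' := mem_Icc.mp hj
        have hd' : q ∣ a' (K * j % p) := by
          rw [horb _ (idx_mem hp hKcop hj), inv_index hp.one_lt hK j (by omega)]
          exact hdj
        have := SC.fact_eq ha' (idx_mem hp hKcop hj) hq hd'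
        rw [this, hvm]
      · have h1 : m.factorization q = 0 := Nat.factorization_eq_zero_of_not_dvd hqm
        have h2 : m'.factorization q = 0 :=
          Nat.factorization_eq_zero_of_not_dvd (fun h => hqm ((hdvd_iff q hq).mp h))
        rw [h1, h2, Nat.mul_zero, Nat.zero_mod]
    · rw [Nat.factorization_eq_zero_of_not_prime _ hq,
        Nat.factorization_eq_zero_of_not_prime _ hq, Nat.mul_zero, Nat.zero_mod]
  -- construct t
  set t := ∏ q ∈ m.primeFactors, q ^ (K * m.factorization q / p) with htdef
  have ht0 : 0 < t := Finset.prod_pos fun q hq =>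
    pow_pos (Nat.prime_of_mem_primeFactors hq).pos _
  have htfac : ∀ r : ℕ, t.factorization r =
      if r ∈ m.primeFactors then K * m.factorization r / p else 0 :=
    fact_prod_pow (fun q hq => Nat.prime_of_mem_primeFactors hq) _
  have key : m' * t ^ p = m ^ K := by
    refine Nat.eq_of_factorization_eq (by positivity) (by positivity) fun r => ?_
    rw [Nat.factorization_mul hm'0.ne' (pow_pos ht0 p).ne', Nat.factorization_pow,
      Nat.factorization_pow]
    simp only [Finsupp.coe_add, Pi.add_apply, Finsupp.smul_apply, smul_eq_mul]
    rw [hval r, htfac r]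
    by_cases hrm : r ∈ m.primeFactors
    · simp only [hrm, if_true]
      have := Nat.mod_add_div (K * m.factorization r) p
      omega
    · have h1 : m.factorization r = 0 := by
        by_cases hr : r.Prime
        · by_cases hd : r ∣ m
          · exact absurd (Nat.mem_primeFactors.mpr ⟨hr, hd, hm0.ne'⟩) hrm
          · exact Nat.factorization_eq_zero_of_not_dvd hd
        · exact Nat.factorization_eq_zero_of_not_prime _ hr
      simp [hrm, h1]
  -- now the real numbers
  set α : ℝ := (m : ℝ) ^ ((p : ℝ)⁻¹) with hα
  set β : ℝ := (m' : ℝ) ^ ((p : ℝ)⁻¹) with hβ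
  have hαpow : α ^ p = (m : ℝ) := Real.rpow_inv_natCast_pow (by positivity) hp.ne_zero
  have hβpow : β ^ p = (m' : ℝ) := Real.rpow_inv_natCast_pow (by positivity) hp.ne_zero
  have hαpos : 0 < α := Real.rpow_pos_of_pos (by exact_mod_cast hm0) _
  have hβpos : 0 < β := Real.rpow_pos_of_pos (by exact_mod_cast hm'0) _
  have htpos : (0:ℝ) < (t:ℝ) := by exact_mod_cast ht0
  have hpoweq : (β * (t:ℝ)) ^ p = (α ^ K) ^ p := by
    rw [mul_pow, hβpow, ← pow_mul, mul_comm K p, pow_mul, hαpow]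
    exact_mod_cast key
  have hβt : β * (t:ℝ) = α ^ K := by
    have h1 : 0 ≤ β * (t:ℝ) := by positivity
    have h2 : 0 ≤ α ^ K := by positivity
    have := congrArg (fun x : ℝ => x ^ ((p:ℝ)⁻¹)) hpoweq
    simpa [Real.pow_rpow_inv_natCast h1 hp.ne_zero,
      Real.pow_rpow_inv_natCast h2 hp.ne_zero] using this
  have hβmem : β ∈ IntermediateField.adjoin ℚ {α} := by
    have hβeq : β = α ^ K * ((t:ℝ))⁻¹ := by
      field_simp
      linarith [hβt]
    rw [hβeq]
    exact mul_mem (pow_mem (IntermediateField.mem_adjoin_simple_self ℚ α) K)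
      (inv_mem (IntermediateField.natCast_mem _ t))
  rw [pureField, pureField]
  rw [IntermediateField.adjoin_le_iff, Set.singleton_subset_iff]
  exact hβmem

lemma sc_no_pow {p : ℕ} (hp : p.Prime) {a : ℕ → ℕ} (ha : StronglyCarefree p a) :
    ∀ q : ℕ, q.Prime → ¬ q ^ p ∣ (∏ i ∈ Icc 1 (p-1), a i ^ i) := by
  intro q hq hdvd
  have hle := (Nat.Prime.pow_dvd_iff_le_factorization hq (SC.prod_pos ha).ne').mp hdvd
  have := SC.fact_le ha q
  have := hp.two_le
  omega

lemma field_eq_to_orbit {p : ℕ} (hp : p.Prime) (hodd : Odd p) {a a' : ℕ → ℕ}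
    (ha : StronglyCarefree p a) (hm : 1 < ∏ i ∈ Icc 1 (p-1), a i ^ i)
    (ha' : StronglyCarefree p a') (hm' : 1 < ∏ i ∈ Icc 1 (p-1), a' i ^ i)
    (hfield : pureField p a = pureField p a') : SameOrbit p a a' := by
  classical
  set m := ∏ i ∈ Icc 1 (p-1), a i ^ i with hmdef
  set m' := ∏ i ∈ Icc 1 (p-1), a' i ^ i with hm'def
  have hm0 : 0 < m := SC.prod_pos ha
  have hm'0 : 0 < m' := SC.prod_pos ha'
  have hfm := sc_no_pow hp ha
  have hfm' := sc_no_pow hp ha'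
  have hmem : ((m' : ℝ) ^ ((p : ℝ)⁻¹)) ∈ IntermediateField.adjoin ℚ
      {((m : ℝ) ^ ((p : ℝ)⁻¹))} := by
    have h1 : ((m' : ℝ) ^ ((p : ℝ)⁻¹)) ∈ pureField p a' :=
      IntermediateField.mem_adjoin_simple_self ℚ _
    rw [← hfield] at h1
    exact h1
  obtain ⟨k, t, hk0, hklt, hkey⟩ := key_exponent hp hodd hm hm' hfm hfm' hmem
  have hval : ∀ q : ℕ, q.Prime → m'.factorization q = k * m.factorization q % p := by
    intro q hq
    have hE : m'.factorization q + (p - k) * m.factorization q = p * t.factorization q := by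
      have h := congrArg (fun n : ℕ => n.factorization q) hkey
      simp only [Nat.factorization_mul hm'0.ne' (pow_pos hm0 _).ne', Nat.factorization_pow,
        Finsupp.coe_add, Pi.add_apply, Finsupp.smul_apply, smul_eq_mul] at h
      exact h
    set v := m.factorization q with hvdef
    set v' := m'.factorization q with hv'def
    set w := t.factorization q with hwdef
    have hsplit : (p - k) * v + k * v = p * v := by rw [← add_mul, Nat.sub_add_cancel hklt.le]
    have h1 : v' + p * v = p * w + k * v := by
      rw [← hsplit, ← add_assoc, hE]
    have hz : p * v ≡ 0 [MOD p] := (Nat.modEq_zero_iff_dvd).mpr (dvd_mul_right p v)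
    have hz' : p * w ≡ 0 [MOD p] := (Nat.modEq_zero_iff_dvd).mpr (dvd_mul_right p w)
    have ha1 : v' + p * v ≡ v' [MOD p] := by simpa using (Nat.ModEq.refl v').add hz
    have ha2 : p * w + k * v ≡ k * v [MOD p] := by
      simpa using hz'.add (Nat.ModEq.refl (k * v))
    have ha3 : v' + p * v ≡ k * v [MOD p] := by rw [h1]; exact ha2
    have hmodq : v' ≡ k * v [MOD p] := ha1.symm.trans ha3
    have hv'lt : v' < p := lt_of_le_of_lt (SC.fact_le ha' q) (by have := hp.two_le; omega)
    have hfin : v' % p = (k * v) % p := hmodq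
    rwa [Nat.mod_eq_of_lt hv'lt] at hfin
  obtain ⟨K, -, hK⟩ := Nat.exists_mul_mod_eq_one_of_coprime
    (by
      have hnd : ¬ p ∣ k := fun h => by have := Nat.le_of_dvd hk0 h; omega
      exact ((Nat.Prime.coprime_iff_not_dvd hp).mpr hnd).symm) hp.one_lt
  have hKcop : Nat.Coprime K p := inv_coprime hK
  have hKk : K * k % p = 1 := by rwa [Nat.mul_comm] at hK
  refine ⟨K, hKcop, fun i hi => ?_⟩
  have hKi : K * i % p ∈ Icc 1 (p-1) := idx_mem hp hKcop hi
  have hi' := mem_Icc.mp hi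
  have hp2 := hp.two_le
  apply sqf_eq (ha'.1 i hi).1 (ha'.1 i hi).2 (ha.1 _ hKi).1 (ha.1 _ hKi).2
  intro q hq
  constructor
  · intro hd
    have hv' : m'.factorization q = i := SC.fact_eq ha' hi hq hd
    have hvrel := hval q hq
    have hki : k * m.factorization q % p = i := by rw [← hvrel, hv']
    have hvlt : m.factorization q < p := lt_of_le_of_lt (SC.fact_le ha q) (by omega)
    have hstep : K * (k * m.factorization q % p) % p = m.factorization q :=
      inv_index hp.one_lt hKk (m.factorization q) hvlt
    have hveq : m.factorization q = K * i % p := by rw [← hstep, hki]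
    exact (SC.dvd_iff ha hKi hq).mpr hveq
  · intro hd
    have hv : m.factorization q = K * i % p := SC.fact_eq ha hKi hq hd
    have hv' : m'.factorization q = i := by
      rw [hval q hq, hv, inv_index hp.one_lt hK i (by omega)]
    exact (SC.dvd_iff ha' hi hq).mpr hv'

end Aux

/-- The map sending a strongly carefree tuple `(a 1, …, a (p−1))` (with `∏ a i ^ i > 1`) to
the field `ℚ((∏ a i ^ i)^(1/p)) ⊆ ℝ` descends to a bijection between orbits of the
`(ℤ/pℤ)ˣ`-action permuting indices and isomorphism classes of pure prime degree `p`
fields: it lands in the pure fields, hits every pure field, and identifies two tuples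
exactly when they lie in the same orbit. -/
theorem pure_prime_degree_fields_parametrized
    (p : ℕ) (hp : p.Prime) (hodd : Odd p) :
    (∀ a : ℕ → ℕ, StronglyCarefree p a → 1 < ∏ i ∈ Finset.Icc 1 (p - 1), a i ^ i →
      IsPureField p (pureField p a)) ∧
    (∀ K : IntermediateField ℚ ℝ, IsPureField p K →
      ∃ a : ℕ → ℕ, StronglyCarefree p a ∧ 1 < ∏ i ∈ Finset.Icc 1 (p - 1), a i ^ i ∧
        pureField p a = K) ∧
    (∀ a a' : ℕ → ℕ,
      StronglyCarefree p a → 1 < ∏ i ∈ Finset.Icc 1 (p - 1), a i ^ i →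
      StronglyCarefree p a' → 1 < ∏ i ∈ Finset.Icc 1 (p - 1), a' i ^ i →
        (pureField p a = pureField p a' ↔ SameOrbit p a a')) := by
  refine ⟨?_, ?_, ?_⟩
  · intro a ha hm
    exact ⟨∏ i ∈ Finset.Icc 1 (p-1), a i ^ i, hm, sc_no_pow hp ha, rfl⟩
  · rintro K ⟨m, hm, hfree, rfl⟩
    refine ⟨can m, ⟨fun i _ => ⟨can_pos m i, can_squarefree m i⟩,
      fun i _ j _ hij => can_coprime hij⟩, ?_, ?_⟩
    · rw [can_prod hp.two_le hm hfree]; exact hm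
    · unfold pureField
      rw [can_prod hp.two_le hm hfree]
  · intro a a' ha hm ha' hm'
    constructor
    · exact field_eq_to_orbit hp hodd ha hm ha' hm'
    · intro horb
      obtain ⟨k2, hk2, h2'⟩ := orbit_symm hp horb
      obtain ⟨k, hk, h⟩ := horb
      exact le_antisymm (orbit_le hp ha' ha hk2 h2') (orbit_le hp ha ha' hk h)
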